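/- For the reflected random walk X_{n+1} = |X_n + η_{n+1}| on ℝ≥0, the jump from state x ≥ 0 satisfies the deterministic identity |x + η| - x = η - 2·min(x+η, 0) = η + 2(x+η)⁻ for every real η, where a⁻ = max(-a, 0). Consequently, if E η = 0, E η² < ∞, and 0 < s < x, then the truncated first moment m₁^{[s]}(x) := E[(|x+η| - x)·1{| |x+η| - x | ≤ s}] satisfies |m₁^{[s]}(x)| ≤ 2·E[|η| ; |η| > s]. -/

import Mathlib

open MeasureTheory

/-- For the reflected random walk `X_{n+1} = |X_n + η|`: the jump identity
`|x+η| - x = η - 2 min(x+η, 0) = η + 2 (x+η)⁻` holds for all `x ≥ 0`, `η ∈ ℝ`;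
and if `E η = 0`, `E η² < ∞` and `0 < s < x`, then the truncated first moment
satisfies `|m₁^{[s]}(x)| ≤ 2 E[|η| ; |η| > s]`. -/
theorem stmt16 {Ω : Type*} [MeasurableSpace Ω] (μ : Measure Ω) [IsProbabilityMeasure μ]
    (η : Ω → ℝ) (hη_meas : Measurable η)
    (hη_int : Integrable η μ) (hη_sq : Integrable (fun ω => η ω ^ 2) μ)
    (hmean : ∫ ω, η ω ∂μ = 0)
    (x s : ℝ) (hs : 0 < s) (hsx : s < x) :
    (∀ x' e : ℝ, 0 ≤ x' → |x' + e| - x' = e - 2 * min (x' + e) 0 ∧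
        |x' + e| - x' = e + 2 * max (-(x' + e)) 0) ∧
      |∫ ω in {ω | |(|x + η ω| - x)| ≤ s}, (|x + η ω| - x) ∂μ|
        ≤ 2 * ∫ ω in {ω | s < |η ω|}, |η ω| ∂μ := by
  have hx0 : (0:ℝ) < x := hs.trans hsx
  constructor
  · intro x' e _
    rcases le_or_gt 0 (x' + e) with h | h
    · rw [abs_of_nonneg h, min_eq_right h, max_eq_right (by linarith)]
      constructor <;> ring
    · rw [abs_of_neg h, min_eq_left h.le, max_eq_left (by linarith)]
      constructor <;> ring
  · set f : Ω → ℝ := fun ω => |x + η ω| - x with hf_def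
    have hfm : Measurable f := (measurable_const.add hη_meas).abs.sub measurable_const
    have hfb : ∀ ω, |f ω| ≤ |η ω| := by
      intro ω
      have h := abs_abs_sub_abs_le_abs_sub (x + η ω) x
      rw [abs_of_pos hx0] at h
      simpa [hf_def] using h
    have hf_int : Integrable f μ :=
      hη_int.mono hfm.aestronglyMeasurable (ae_of_all _ fun ω => by
        simpa [Real.norm_eq_abs] using hfb ω)
    set S : Set Ω := {ω | |η ω| ≤ s} with hS_def
    set A : Set Ω := {ω | |f ω| ≤ s} with hA_def
    have hS : MeasurableSet S := measurableSet_le hη_meas.abs measurable_const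
    have hA : MeasurableSet A := measurableSet_le hfm.abs measurable_const
    have hfS : ∀ ω ∈ S, f ω = η ω := by
      intro ω hω
      have h1 : |η ω| ≤ s := hω
      have h2 : 0 ≤ x + η ω := by
        have := abs_le.1 h1; linarith
      simp [hf_def, abs_of_nonneg h2]
    have hSA : S ⊆ A := by
      intro ω hω
      have : |f ω| = |η ω| := by rw [hfS ω hω]
      simpa [hA_def, this] using (show |η ω| ≤ s from hω)
    have hAeq : A = S ∪ (A \ S) := (Set.union_diff_cancel hSA).symm
    have hsplit : ∫ ω in A, f ω ∂μ = ∫ ω in S, f ω ∂μ + ∫ ω in A \ S, f ω ∂μ := by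
      conv_lhs => rw [hAeq]
      exact setIntegral_union Set.disjoint_sdiff_right (hA.diff hS)
        hf_int.integrableOn hf_int.integrableOn
    have h1 : ∫ ω in S, f ω ∂μ = ∫ ω in S, η ω ∂μ := setIntegral_congr_fun hS hfS
    have hcompl : {ω | s < |η ω|} = Sᶜ := by
      ext ω; simp [hS_def, not_le]
    have hadd : ∫ ω in S, η ω ∂μ + ∫ ω in Sᶜ, η ω ∂μ = 0 := by
      rw [integral_add_compl hS hη_int, hmean]
    have h2 : |∫ ω in S, η ω ∂μ| ≤ ∫ ω in Sᶜ, |η ω| ∂μ := by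
      have he : ∫ ω in S, η ω ∂μ = -∫ ω in Sᶜ, η ω ∂μ := by linarith
      rw [he, abs_neg]
      simpa [Real.norm_eq_abs] using
        norm_integral_le_integral_norm (μ := μ.restrict Sᶜ) η
    have hBsub : A \ S ⊆ Sᶜ := fun ω hω => hω.2
    have h3 : |∫ ω in A \ S, f ω ∂μ| ≤ ∫ ω in Sᶜ, |η ω| ∂μ := by
      calc |∫ ω in A \ S, f ω ∂μ| ≤ ∫ ω in A \ S, |f ω| ∂μ := by
            simpa [Real.norm_eq_abs] using
              norm_integral_le_integral_norm (μ := μ.restrict (A \ S)) f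
        _ ≤ ∫ ω in A \ S, |η ω| ∂μ :=
            setIntegral_mono hf_int.abs.integrableOn hη_int.abs.integrableOn hfb
        _ ≤ ∫ ω in Sᶜ, |η ω| ∂μ :=
            setIntegral_mono_set hη_int.abs.integrableOn
              (ae_of_all _ fun ω => abs_nonneg _) (HasSubset.Subset.eventuallyLE hBsub)
    calc |∫ ω in A, f ω ∂μ| = |∫ ω in S, η ω ∂μ + ∫ ω in A \ S, f ω ∂μ| := by
          rw [hsplit, h1]
      _ ≤ |∫ ω in S, η ω ∂μ| + |∫ ω in A \ S, f ω ∂μ| := abs_add_le _ _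
      _ ≤ 2 * ∫ ω in {ω | s < |η ω|}, |η ω| ∂μ := by rw [hcompl]; linarith
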